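/- Bhatia-Davis inequality: if a random variable X satisfies a ≤ X ≤ b almost surely, then Var(X) ≤ (b − E[X])(E[X] − a); in particular for X ∈ [0,1], Var(X) ≤ E[X](1 − E[X]) ≤ E[X]. -/

import Mathlib

open MeasureTheory ProbabilityTheory

/-- Bhatia–Davis inequality, and the special case of [0,1]-valued variables. -/
theorem stmt_13 {Ω : Type*} [MeasurableSpace Ω] (μ : Measure Ω) [IsProbabilityMeasure μ]
    (X : Ω → ℝ) (hX : MemLp X 2 μ) (a b : ℝ) (hab : a ≤ b)
    (hbound : ∀ᵐ ω ∂μ, a ≤ X ω ∧ X ω ≤ b) :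
    variance X μ ≤ (b - ∫ ω, X ω ∂μ) * ((∫ ω, X ω ∂μ) - a) ∧
      (a = 0 → b = 1 →
        variance X μ ≤ (∫ ω, X ω ∂μ) * (1 - ∫ ω, X ω ∂μ) ∧
          variance X μ ≤ ∫ ω, X ω ∂μ) := by
  have h : ∀ᵐ ω ∂μ, X ω ∈ Set.Icc a b := hbound.mono fun ω hw => ⟨hw.1, hw.2⟩
  have key := variance_le_sub_mul_sub h hX.aestronglyMeasurable.aemeasurable
  refine ⟨key, fun ha hb => ?_⟩
  subst ha hb
  simp only [sub_zero] at key
  have hm : (∫ ω, X ω ∂μ) ≤ 1 := by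
    have := integral_mono_ae (hX.integrable (by norm_num)) (integrable_const (1:ℝ))
      (hbound.mono fun ω hw => hw.2)
    simpa using this
  have hm0 : 0 ≤ ∫ ω, X ω ∂μ := integral_nonneg_of_ae (hbound.mono fun ω hw => hw.1)
  constructor
  · nlinarith
  · nlinarith
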